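/- Let n and k be integers with n/2 < k < n. If n and k have different parity, there exists an n-zero-free sequence of length n − 1 + k in Z_n whose maximum term multiplicity is exactly k, namely the sequence consisting of 0 with multiplicity k, 1 with multiplicity k, 2 with multiplicity (n−1−k)/2 and −1 with multiplicity (n−1−k)/2. If n and k have the same parity, there exists an n-zero-free sequence of length n − 1 + k in Z_n whose maximum term multiplicity is exactly k + 1, namely the sequence consisting of 0 with multiplicity k+1, 1 with multiplicity k−1, 2 with multiplicity (n−k)/2 and −1 with multiplicity (n−k−2)/2. -/

import Mathlib

/-- `γ` is `n`-zero-free: it has no subsequence of length `n` with sum zero. -/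
def NZeroFree {n : ℕ} (γ : Multiset (ZMod n)) : Prop :=
  ∀ σ ≤ γ, Multiset.card σ = n → σ.sum ≠ 0

lemma multiset_split {α : Type*} [DecidableEq α] {σ s t : Multiset α} (h : σ ≤ s + t) :
    ∃ u v, u ≤ s ∧ v ≤ t ∧ σ = u + v := by
  refine ⟨σ ∩ s, σ - s, Multiset.inter_le_right, ?_, ?_⟩
  · rw [Multiset.sub_le_iff_le_add]
    rwa [add_comm]
  · ext a
    simp only [Multiset.count_add, Multiset.count_inter, Multiset.count_sub]
    have := Multiset.le_iff_count.mp h a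
    simp only [Multiset.count_add] at this
    omega

lemma zf (n A B C D : ℕ) (hA : A + 2 * D < n) (hB : B + 2 * C < n) :
    NZeroFree (Multiset.replicate A (0 : ZMod n) + Multiset.replicate B (1 : ZMod n) +
      Multiset.replicate C (2 : ZMod n) + Multiset.replicate D (-1 : ZMod n)) := by
  intro σ hle hcard hsum
  obtain ⟨u, v4, hu, hv4, rfl⟩ := multiset_split hle
  obtain ⟨u', v3, hu', hv3, rfl⟩ := multiset_split hu
  obtain ⟨v1, v2, hv1, hv2, rfl⟩ := multiset_split hu'
  obtain ⟨a, ha, rfl⟩ := Multiset.le_replicate_iff.mp hv1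
  obtain ⟨b, hb, rfl⟩ := Multiset.le_replicate_iff.mp hv2
  obtain ⟨c, hc, rfl⟩ := Multiset.le_replicate_iff.mp hv3
  obtain ⟨d, hd, rfl⟩ := Multiset.le_replicate_iff.mp hv4
  simp only [Multiset.card_add, Multiset.card_replicate] at hcard
  simp only [Multiset.sum_add, Multiset.sum_replicate, smul_zero, nsmul_eq_mul, mul_one,
    zero_add] at hsum
  have hzero : ((b + 2 * c - d : ℤ) : ZMod n) = 0 := by
    push_cast
    rw [← hsum]
    ring
  rw [ZMod.intCast_zmod_eq_zero_iff_dvd] at hzero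
  have h0 : (b : ℤ) + 2 * c - d = 0 := by
    apply Int.eq_zero_of_abs_lt_dvd hzero
    rw [abs_lt]
    constructor <;> push_cast <;> omega
  omega

lemma zmod_cast_ne (n : ℕ) (a b : ℤ) (h : ¬ (n : ℤ) ∣ (a - b)) :
    (a : ZMod n) ≠ (b : ZMod n) := by
  intro he
  apply h
  rw [← ZMod.intCast_zmod_eq_zero_iff_dvd]
  push_cast
  rw [he, sub_self]

/-- Sharpness of the multiplicity bounds: for `n/2 < k < n`, the explicit sequences
`0^k 1^k 2^((n−1−k)/2) (−1)^((n−1−k)/2)` (different parity) and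
`0^(k+1) 1^(k−1) 2^((n−k)/2) (−1)^((n−k−2)/2)` (same parity) are `n`-zero-free of
length `n − 1 + k` with maximum term multiplicity exactly `k`, resp. `k + 1`. -/
theorem high_multiplicity_sharp (n k : ℕ) (h1 : n < 2 * k) (h2 : k < n) :
    (n % 2 ≠ k % 2 →
      let γ : Multiset (ZMod n) :=
        Multiset.replicate k (0 : ZMod n) + Multiset.replicate k (1 : ZMod n) +
        Multiset.replicate ((n - 1 - k) / 2) (2 : ZMod n) +
        Multiset.replicate ((n - 1 - k) / 2) (-1 : ZMod n)
      NZeroFree γ ∧ Multiset.card γ = n - 1 + k ∧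
        (∀ x : ZMod n, γ.count x ≤ k) ∧ (∃ x : ZMod n, γ.count x = k)) ∧
    (n % 2 = k % 2 →
      let γ : Multiset (ZMod n) :=
        Multiset.replicate (k + 1) (0 : ZMod n) + Multiset.replicate (k - 1) (1 : ZMod n) +
        Multiset.replicate ((n - k) / 2) (2 : ZMod n) +
        Multiset.replicate ((n - k - 2) / 2) (-1 : ZMod n)
      NZeroFree γ ∧ Multiset.card γ = n - 1 + k ∧
        (∀ x : ZMod n, γ.count x ≤ k + 1) ∧ (∃ x : ZMod n, γ.count x = k + 1)) := by
  have hdvd : ∀ m : ℤ, 0 < m → m < n → ¬ (n : ℤ) ∣ m := by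
    intro m hm hmn hd
    have := Int.le_of_dvd hm hd
    omega
  have e10 : (1 : ZMod n) ≠ 0 := by
    have := zmod_cast_ne n 1 0 (hdvd 1 (by omega) (by push_cast; omega))
    simpa using this
  have e20 : (2 : ZMod n) ≠ 0 := by
    have := zmod_cast_ne n 2 0 (hdvd 2 (by omega) (by push_cast; omega))
    simpa using this
  have e21 : (2 : ZMod n) ≠ 1 := by
    have := zmod_cast_ne n 2 1 (hdvd 1 (by omega) (by push_cast; omega))
    simpa using this
  have em0 : (-1 : ZMod n) ≠ 0 := by
    have := zmod_cast_ne n 0 (-1) (by norm_num; exact hdvd 1 (by omega) (by push_cast; omega))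
    simpa using this.symm
  have em1 : (-1 : ZMod n) ≠ 1 := by
    have := zmod_cast_ne n 1 (-1) (by norm_num; exact hdvd 2 (by omega) (by push_cast; omega))
    simpa using this.symm
  have em2 : n ≠ 3 → (-1 : ZMod n) ≠ 2 := by
    intro hne
    have := zmod_cast_ne n 2 (-1) (by norm_num; exact hdvd 3 (by omega) (by push_cast; omega))
    simpa using this.symm
  constructor
  · intro hpar γ
    have hm2 : 2 * ((n - 1 - k) / 2) = n - 1 - k := by omega
    have em2' : (2 : ZMod n) = -1 → (n - 1 - k) / 2 = 0 := by
      intro h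
      have hn3 : n = 3 := by
        by_contra hne
        exact em2 hne h.symm
      omega
    have hcount : ∀ x : ZMod n, γ.count x =
        (if (0 : ZMod n) = x then k else 0) + (if (1 : ZMod n) = x then k else 0) +
        (if (2 : ZMod n) = x then (n - 1 - k) / 2 else 0) + (if (-1 : ZMod n) = x then (n - 1 - k) / 2 else 0) := by
      intro x
      simp only [γ, Multiset.count_add, Multiset.count_replicate]
    refine ⟨zf n k k _ _ (by omega) (by omega), ?_, ?_, ?_⟩
    · simp only [γ, Multiset.card_add, Multiset.card_replicate]
      omega
    · intro x
      rw [hcount]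
      split_ifs <;> first | omega | simp_all | (exfalso; omega)
    · refine ⟨0, ?_⟩
      rw [hcount]
      simp [e10, e20, em0]
  · intro hpar γ
    have hn5 : 5 ≤ n := by omega
    have em2'' : (-1 : ZMod n) ≠ 2 := em2 (by omega)
    have hcount : ∀ x : ZMod n, γ.count x =
        (if (0 : ZMod n) = x then k + 1 else 0) + (if (1 : ZMod n) = x then k - 1 else 0) +
        (if (2 : ZMod n) = x then (n - k) / 2 else 0) + (if (-1 : ZMod n) = x then (n - k - 2) / 2 else 0) := by
      intro x
      simp only [γ, Multiset.count_add, Multiset.count_replicate]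
    refine ⟨zf n (k + 1) (k - 1) _ _ (by omega) (by omega), ?_, ?_, ?_⟩
    · simp only [γ, Multiset.card_add, Multiset.card_replicate]
      omega
    · intro x
      rw [hcount]
      split_ifs <;> first | omega | simp_all | (exfalso; omega)
    · refine ⟨0, ?_⟩
      rw [hcount]
      simp [e10, e20, em0]
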